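/- Let G be a finite nonabelian transitively commutative group with trivial center. Then every Sylow p-subgroup of G is abelian, and any two distinct Sylow p-subgroups of G (for the same prime p) intersect trivially. -/

import Mathlib

/-- In a finite nonabelian transitively commutative group with trivial center,
the Sylow subgroups are abelian and distinct Sylow `p`-subgroups intersect
trivially. -/
theorem tc_trivial_center_sylow_abelian_and_trivial_intersection
    (G : Type*) [Group G] [Finite G]
    (hnonab : ¬ ∀ a b : G, a * b = b * a)
    (hTC : ∀ g : G, g ∉ Subgroup.center G →
      ∀ x ∈ Subgroup.centralizer {g}, ∀ y ∈ Subgroup.centralizer {g}, x * y = y * x)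
    (hZ : Subgroup.center G = ⊥) (p : ℕ) (hp : p.Prime) :
    (∀ P : Sylow p G, ∀ x ∈ (P : Subgroup G), ∀ y ∈ (P : Subgroup G), x * y = y * x) ∧
    (∀ P Q : Sylow p G, P ≠ Q → (P : Subgroup G) ⊓ (Q : Subgroup G) = ⊥) := by
  have habel : ∀ P : Sylow p G, ∀ x ∈ (P : Subgroup G), ∀ y ∈ (P : Subgroup G),
      x * y = y * x := by
    intro P x hx y hy
    by_cases hbot : (P : Subgroup G) = ⊥
    · rw [hbot, Subgroup.mem_bot] at hx hy
      subst hx; subst hy; rfl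
    · haveI : Nontrivial (P : Subgroup G) :=
        (Subgroup.nontrivial_iff_ne_bot _).mpr hbot
      haveI := Fact.mk hp
      haveI := IsPGroup.center_nontrivial P.2
      obtain ⟨z, hz1⟩ := exists_ne (1 : Subgroup.center (P : Subgroup G))
      have hgne : (z : G) ≠ 1 := by
        intro h
        apply hz1
        ext
        exact h
      have hgZ : (z : G) ∉ Subgroup.center G := by
        rw [hZ, Subgroup.mem_bot]
        exact hgne
      have hle : (P : Subgroup G) ≤ Subgroup.centralizer {(z : G)} := by
        intro h hh
        rw [Subgroup.mem_centralizer_singleton_iff]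
        have := z.2
        rw [Subgroup.mem_center_iff] at this
        exact congrArg Subtype.val (this ⟨h, hh⟩)
      exact hTC _ hgZ x (hle hx) y (hle hy)
  refine ⟨habel, ?_⟩
  intro P Q hPQ
  by_contra hne
  obtain ⟨x, hxne⟩ := (Subgroup.ne_bot_iff_exists_ne_one.mp hne)
  have hxP : (x : G) ∈ (P : Subgroup G) := x.2.1
  have hxQ : (x : G) ∈ (Q : Subgroup G) := x.2.2
  have hxZ : (x : G) ∉ Subgroup.center G := by
    rw [hZ, Subgroup.mem_bot]
    exact fun h => hxne (Subtype.ext h)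
  have hPle : (P : Subgroup G) ≤ Subgroup.centralizer {(x : G)} := by
    intro h hh
    rw [Subgroup.mem_centralizer_singleton_iff]
    exact habel P _ hh _ hxP
  have hQle : (Q : Subgroup G) ≤ Subgroup.centralizer {(x : G)} := by
    intro h hh
    rw [Subgroup.mem_centralizer_singleton_iff]
    exact habel Q _ hh _ hxQ
  -- P normalizes Q since all elements of the centralizer commute
  have hnorm : (P : Subgroup G) ≤ Subgroup.normalizer ((Q : Subgroup G) : Set G) := by
    intro g hg
    apply Subgroup.mem_normalizer_fintype
    intro q hq
    have : g * q * g⁻¹ = q := by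
      rw [hTC _ hxZ g (hPle hg) q (hQle hq), mul_inv_cancel_right]
    rwa [this]
  have hsup : IsPGroup p ((P : Subgroup G) ⊔ (Q : Subgroup G) : Subgroup G) :=
    IsPGroup.to_sup_of_normal_right' P.2 Q.2 hnorm
  have h1 : ((P : Subgroup G) ⊔ (Q : Subgroup G)) = P := P.3 hsup le_sup_left
  have hQP : (Q : Subgroup G) ≤ P := h1 ▸ le_sup_right
  exact hPQ (Sylow.ext (Q.3 P.2 hQP))
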